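/- For every unweighted instance F of a Min-CSP Λ and every ε > 0, there exists a regular unweighted instance G of the same Min-CSP Λ such that: (a) Opt(F) ≥ Opt(G), and (b) for every assignment ζ to the variables of G there exists an assignment χ to the variables of F with Val_χ(F) ≤ Val_ζ(G) + ε. -/

import Mathlib

open Finset

/-- An instance of a CSP over domain `Fin q` with `n` variables: a finite list of
constraints, each a predicate applied to a scope of distinct variables, with
nonnegative weights summing to `1`. -/
structure CSPInstance (q n : ℕ) where
  m : ℕ
  ar : Fin m → ℕ
  pred : (r : Fin m) → ((Fin (ar r) → Fin q) → Bool)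
  scope : (r : Fin m) → Fin (ar r) → Fin n
  scope_inj : ∀ r, Function.Injective (scope r)
  w : Fin m → ℝ
  w_nonneg : ∀ r, 0 ≤ w r
  w_sum : ∑ r, w r = 1

namespace CSPInstance

variable {q n : ℕ}

/-- The value of an assignment: the total weight of satisfied constraints. -/
noncomputable def val (F : CSPInstance q n) (χ : Fin n → Fin q) : ℝ :=
  ∑ r, F.w r * (if F.pred r (fun i => χ (F.scope r i)) then 1 else 0)

/-- The optimum of a Max-CSP instance. -/
noncomputable def optMax (F : CSPInstance q n) : ℝ :=
  ⨆ χ : Fin n → Fin q, F.val χ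

/-- The optimum of a Min-CSP instance. -/
noncomputable def optMin (F : CSPInstance q n) : ℝ :=
  ⨅ χ : Fin n → Fin q, F.val χ

/-- An instance is unweighted if all constraints have weight `1/m`. -/
def Unweighted (F : CSPInstance q n) : Prop :=
  ∀ r, F.w r = 1 / F.m

/-- The degree of a variable: the number of constraints whose scope contains it. -/
noncomputable def degree (F : CSPInstance q n) (i : Fin n) : ℕ :=
  (Finset.univ.filter (fun r => ∃ j, F.scope r j = i)).card

/-- An instance is regular if all variables have the same degree. -/
def Regular (F : CSPInstance q n) : Prop :=
  ∃ d, ∀ i, F.degree i = d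

/-- `F` is an instance of the CSP `Λ`, viewed as a collection of predicates
(with their arities). -/
def InstanceOf (F : CSPInstance q n)
    (Λ : Set ((k : ℕ) × ((Fin k → Fin q) → Bool))) : Prop :=
  ∀ r, (⟨F.ar r, F.pred r⟩ : (k : ℕ) × ((Fin k → Fin q) → Bool)) ∈ Λ

end CSPInstance

namespace CSPRegularization

open CSPInstance

variable {q n : ℕ}

/-- Clones of variables: variable `i` gets `F.degree i` clones. -/
noncomputable def cloneEquiv (F : CSPInstance q n) :
    (Σ i : Fin n, Fin (F.degree i)) ≃ Fin (∑ i, F.degree i) :=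
  Fintype.equivFinOfCardEq (by simp)

lemma degree_scope_pos (F : CSPInstance q n) (r : Fin F.m) (j : Fin (F.ar r)) :
    0 < F.degree (F.scope r j) := by
  rw [CSPInstance.degree]
  exact Finset.card_pos.2 ⟨r, by
    simp only [Finset.mem_filter, Finset.mem_univ, true_and]
    exact ⟨j, rfl⟩⟩

lemma m_pos (F : CSPInstance q n) : 0 < F.m := by
  rcases Nat.eq_zero_or_pos F.m with h | h
  · exfalso
    have hc : (Finset.univ : Finset (Fin F.m)) = ∅ :=
      Finset.card_eq_zero.mp (by simp [h])
    have hs := F.w_sum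
    rw [hc, Finset.sum_empty] at hs
    norm_num at hs
  · exact h

lemma count_mod {L d s : ℕ} (hd : 0 < d) (hdL : d ∣ L) (hs : s < d) :
    (Finset.univ.filter (fun t : Fin L => (t : ℕ) % d = s)).card = L / d := by
  rw [← Fintype.card_fin (L / d), ← Finset.card_univ]
  refine Finset.card_bij'
    (fun t _ => (⟨(t : ℕ) / d, Nat.div_lt_div_of_lt_of_dvd hdL t.isLt⟩ : Fin (L / d)))
    (fun k _ => (⟨d * (k : ℕ) + s, ?_⟩ : Fin L)) ?_ ?_ ?_ ?_
  · calc d * (k : ℕ) + s < d * (k : ℕ) + d := by omega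
      _ = d * ((k : ℕ) + 1) := by ring
      _ ≤ d * (L / d) := Nat.mul_le_mul_left d k.isLt
      _ = L := Nat.mul_div_cancel' hdL
  · intro t ht
    exact Finset.mem_univ _
  · intro k _
    simp only [Finset.mem_filter, Finset.mem_univ, true_and]
    simp [Nat.mul_add_mod, Nat.mod_eq_of_lt hs]
  · intro t ht
    simp only [Finset.mem_filter, Finset.mem_univ, true_and] at ht
    apply Fin.ext
    simp only []
    conv_rhs => rw [← Nat.div_add_mod (t : ℕ) d]
    rw [ht]
  · intro k _
    apply Fin.ext
    simp only []
    rw [Nat.mul_add_div hd, Nat.div_eq_of_lt hs]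
    omega

/-- The regularized instance: `L` copies of `F`, copy `t` uses clone `t % F.degree i`
of variable `i`. -/
noncomputable def regG (F : CSPInstance q n) (L : ℕ) (hL : 0 < L) (hm : 0 < F.m) :
    CSPInstance q (∑ i, F.degree i) where
  m := L * F.m
  ar r := F.ar (finProdFinEquiv.symm r).2
  pred r := F.pred (finProdFinEquiv.symm r).2
  scope r j :=
    cloneEquiv F ⟨F.scope (finProdFinEquiv.symm r).2 j,
      ⟨((finProdFinEquiv.symm r).1 : ℕ) % F.degree (F.scope (finProdFinEquiv.symm r).2 j),
        Nat.mod_lt _ (degree_scope_pos F _ j)⟩⟩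
  scope_inj r := by
    intro j j' h
    have h2 := (cloneEquiv F).injective h
    have h3 : F.scope (finProdFinEquiv.symm r).2 j = F.scope (finProdFinEquiv.symm r).2 j' :=
      congrArg Sigma.fst h2
    exact F.scope_inj _ h3
  w _ := 1 / ((L * F.m : ℕ) : ℝ)
  w_nonneg r := by positivity
  w_sum := by
    rw [Finset.sum_const, Finset.card_univ, Fintype.card_fin, nsmul_eq_mul]
    rw [mul_one_div, div_self]
    have h0 : (0 : ℕ) < L * F.m := Nat.mul_pos hL hm
    exact_mod_cast h0.ne'

lemma regG_scope (F : CSPInstance q n) (L : ℕ) (hL : 0 < L) (hm : 0 < F.m)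
    (r' : Fin (L * F.m)) (j) :
    (regG F L hL hm).scope r' j =
      cloneEquiv F ⟨F.scope (finProdFinEquiv.symm r').2 j,
        ⟨((finProdFinEquiv.symm r').1 : ℕ) % F.degree (F.scope (finProdFinEquiv.symm r').2 j),
          Nat.mod_lt _ (degree_scope_pos F _ j)⟩⟩ := rfl

/-- The assignment of `F` read by copy `t`. -/
noncomputable def liftA (hq : 0 < q) (F : CSPInstance q n)
    (ζ : Fin (∑ i, F.degree i) → Fin q) (t : ℕ) : Fin n → Fin q := fun i =>
  if h : 0 < F.degree i then ζ (cloneEquiv F ⟨i, ⟨t % F.degree i, Nat.mod_lt _ h⟩⟩)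
  else ⟨0, hq⟩

lemma val_congr (F : CSPInstance q n) {χ χ' : Fin n → Fin q}
    (h : ∀ (r : Fin F.m) (j : Fin (F.ar r)), χ (F.scope r j) = χ' (F.scope r j)) :
    F.val χ = F.val χ' := by
  unfold CSPInstance.val
  refine Finset.sum_congr rfl fun r _ => ?_
  have he : (fun i => χ (F.scope r i)) = fun i => χ' (F.scope r i) := funext (h r)
  rw [he]

lemma regG_val (hq : 0 < q) (F : CSPInstance q n) (L : ℕ) (hL : 0 < L) (hm : 0 < F.m)
    (hFunw : F.Unweighted) (ζ : Fin (∑ i, F.degree i) → Fin q) :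
    (regG F L hL hm).val ζ = (1 / (L : ℝ)) * ∑ t : Fin L, F.val (liftA hq F ζ (t : ℕ)) := by
  have hcast : ((L * F.m : ℕ) : ℝ) = (L : ℝ) * (F.m : ℝ) := by push_cast; ring
  set H : Fin L × Fin F.m → ℝ := fun p => (1 / ((L * F.m : ℕ) : ℝ)) *
    (if F.pred p.2 (fun i => liftA hq F ζ (p.1 : ℕ) (F.scope p.2 i)) then (1 : ℝ) else 0)
    with hH
  have hsummand : ∀ r' : Fin (L * F.m),
      (regG F L hL hm).w r' *
        (if (regG F L hL hm).pred r' (fun i => ζ ((regG F L hL hm).scope r' i))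
          then (1 : ℝ) else 0)
      = H (finProdFinEquiv.symm r') := by
    intro r'
    have harg : (fun i => ζ ((regG F L hL hm).scope r' i)) =
        (fun i => liftA hq F ζ ((finProdFinEquiv.symm r').1 : ℕ)
          (F.scope (finProdFinEquiv.symm r').2 i)) := by
      funext i
      rw [regG_scope, liftA]
      rw [dif_pos (degree_scope_pos F _ i)]
    calc (regG F L hL hm).w r' *
        (if (regG F L hL hm).pred r' (fun i => ζ ((regG F L hL hm).scope r' i))
          then (1 : ℝ) else 0)
        = (regG F L hL hm).w r' *
        (if (regG F L hL hm).pred r' (fun i => liftA hq F ζ ((finProdFinEquiv.symm r').1 : ℕ)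
          (F.scope (finProdFinEquiv.symm r').2 i)) then (1 : ℝ) else 0) := by rw [harg]; rfl
      _ = H (finProdFinEquiv.symm r') := rfl
  calc (regG F L hL hm).val ζ
      = ∑ r' : Fin (L * F.m), H (finProdFinEquiv.symm r') := by
        rw [CSPInstance.val]
        exact Finset.sum_congr rfl fun r' _ => hsummand r'
    _ = ∑ p : Fin L × Fin F.m, H p := Equiv.sum_comp finProdFinEquiv.symm H
    _ = ∑ t : Fin L, ∑ r : Fin F.m, H (t, r) := Fintype.sum_prod_type _
    _ = ∑ t : Fin L, ∑ r : Fin F.m, (1 / (L : ℝ)) *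
          (F.w r * (if F.pred r (fun i => liftA hq F ζ (t : ℕ) (F.scope r i))
            then (1 : ℝ) else 0)) := by
        refine Finset.sum_congr rfl fun t _ => Finset.sum_congr rfl fun r _ => ?_
        rw [hH]
        simp only []
        rw [hFunw r, hcast]
        ring
    _ = (1 / (L : ℝ)) * ∑ t : Fin L, F.val (liftA hq F ζ (t : ℕ)) := by
        rw [Finset.mul_sum]
        refine Finset.sum_congr rfl fun t _ => ?_
        rw [CSPInstance.val, Finset.mul_sum]

lemma regG_degree (F : CSPInstance q n) (L : ℕ) (hL : 0 < L) (hm : 0 < F.m)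
    (hdvd : ∀ i, 0 < F.degree i → F.degree i ∣ L)
    (v : Fin (∑ i, F.degree i)) : (regG F L hL hm).degree v = L := by
  obtain ⟨⟨i, s⟩, rfl⟩ := (cloneEquiv F).surjective v
  have hdi : 0 < F.degree i := lt_of_le_of_lt (Nat.zero_le _) s.isLt
  have hiff : ∀ r' : Fin (L * F.m),
      (∃ j, (regG F L hL hm).scope r' j = cloneEquiv F ⟨i, s⟩) ↔
      (((finProdFinEquiv.symm r').1 : ℕ) % F.degree i = (s : ℕ) ∧
        ∃ j, F.scope (finProdFinEquiv.symm r').2 j = i) := by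
    intro r'
    constructor
    · rintro ⟨j, hj⟩
      rw [regG_scope] at hj
      have h2 := (cloneEquiv F).injective hj
      obtain ⟨h1, h2'⟩ := Sigma.mk.inj_iff.mp h2
      refine ⟨?_, j, h1⟩
      subst h1
      have h3 := eq_of_heq h2'
      exact congrArg Fin.val h3
    · rintro ⟨hmod, j, hji⟩
      refine ⟨j, ?_⟩
      refine (regG_scope F L hL hm r' j).trans ?_
      subst hji
      exact congrArg (cloneEquiv F)
        (congrArg (Sigma.mk (F.scope (finProdFinEquiv.symm r').2 j)) (Fin.ext hmod))
  calc (regG F L hL hm).degree (cloneEquiv F ⟨i, s⟩)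
      = ∑ r' : Fin (L * F.m),
          (if (∃ j, (regG F L hL hm).scope r' j = cloneEquiv F ⟨i, s⟩) then 1 else 0) := by
        rw [CSPInstance.degree, Finset.card_filter]; rfl
    _ = ∑ r' : Fin (L * F.m),
          (if (((finProdFinEquiv.symm r').1 : ℕ) % F.degree i = (s : ℕ) ∧
            ∃ j, F.scope (finProdFinEquiv.symm r').2 j = i) then 1 else 0) :=
        Finset.sum_congr rfl fun r' _ => if_congr (hiff r') rfl rfl
    _ = ∑ p : Fin L × Fin F.m,
          (if (((p.1 : Fin L) : ℕ) % F.degree i = (s : ℕ) ∧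
            ∃ j, F.scope p.2 j = i) then 1 else 0) :=
        Equiv.sum_comp finProdFinEquiv.symm
          (fun p : Fin L × Fin F.m => if (((p.1 : Fin L) : ℕ) % F.degree i = (s : ℕ) ∧
            ∃ j, F.scope p.2 j = i) then 1 else 0)
    _ = ∑ t : Fin L, ∑ r : Fin F.m,
          (if ((t : ℕ) % F.degree i = (s : ℕ)) then 1 else 0) *
          (if (∃ j, F.scope r j = i) then 1 else 0) := by
        rw [Fintype.sum_prod_type]
        refine Finset.sum_congr rfl fun t _ => Finset.sum_congr rfl fun r _ => ?_
        by_cases hA : (t : ℕ) % F.degree i = (s : ℕ) <;>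
          by_cases hB : ∃ j, F.scope r j = i <;> simp [hA, hB]
    _ = (∑ t : Fin L, (if ((t : ℕ) % F.degree i = (s : ℕ)) then 1 else 0)) *
          (∑ r : Fin F.m, (if (∃ j, F.scope r j = i) then 1 else 0)) := by
        rw [Finset.sum_mul]
        exact Finset.sum_congr rfl fun t _ => by rw [Finset.mul_sum]
    _ = (L / F.degree i) * F.degree i := by
        rw [← Finset.card_filter, ← Finset.card_filter, count_mod hdi (hdvd i hdi) s.isLt,
          ← CSPInstance.degree]
    _ = L := Nat.div_mul_cancel (hdvd i hdi)

end CSPRegularization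

/-- For every unweighted instance `F` of a Min-CSP `Λ` and every `ε > 0`,
there exists a regular unweighted instance `G` of the same Min-CSP `Λ` such that
(a) `Opt(F) ≥ Opt(G)`, and (b) for every assignment `ζ` of `G` there is an assignment
`χ` of `F` with `Val_χ(F) ≤ Val_ζ(G) + ε`. -/
theorem regularization_min {q n : ℕ} (hq : 0 < q)
    (Λ : Set ((k : ℕ) × ((Fin k → Fin q) → Bool))) (hΛfin : Λ.Finite)
    (F : CSPInstance q n) (hF : F.InstanceOf Λ) (hFunw : F.Unweighted)
    (ε : ℝ) (hε : 0 < ε) :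
    ∃ (n' : ℕ) (G : CSPInstance q n'),
      G.InstanceOf Λ ∧ G.Unweighted ∧ G.Regular ∧
      G.optMin ≤ F.optMin ∧
      ∀ ζ : Fin n' → Fin q, ∃ χ : Fin n → Fin q,
        F.val χ ≤ G.val ζ + ε := by
  classical
  obtain hm := CSPRegularization.m_pos F
  set L : ℕ := ∏ i, max 1 (F.degree i) with hLdef
  have hL : 0 < L := Finset.prod_pos (fun i _ => lt_of_lt_of_le one_pos (le_max_left _ _))
  have hdvd : ∀ i, 0 < F.degree i → F.degree i ∣ L := by
    intro i hi
    exact dvd_trans (dvd_of_eq (max_eq_right hi).symm)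
      (Finset.dvd_prod_of_mem _ (Finset.mem_univ i))
  refine ⟨∑ i, F.degree i, CSPRegularization.regG F L hL hm, ?_, ?_, ?_, ?_, ?_⟩
  · intro r; exact hF _
  · intro r; rfl
  · exact ⟨L, CSPRegularization.regG_degree F L hL hm hdvd⟩
  · haveI : Nonempty (Fin n → Fin q) := ⟨fun _ => ⟨0, hq⟩⟩
    obtain ⟨χs, hχs⟩ := Finite.exists_min F.val
    set ζs : Fin (∑ i, F.degree i) → Fin q :=
      fun v => χs ((CSPRegularization.cloneEquiv F).symm v).1 with hζs
    have hval : (CSPRegularization.regG F L hL hm).val ζs = F.val χs := by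
      rw [CSPRegularization.regG_val hq F L hL hm hFunw]
      have hcopy : ∀ t : Fin L, F.val (CSPRegularization.liftA hq F ζs (t : ℕ)) = F.val χs := by
        intro t
        apply CSPRegularization.val_congr
        intro r j
        simp only [CSPRegularization.liftA]
        rw [dif_pos (CSPRegularization.degree_scope_pos F r j)]
        simp [hζs]
      rw [Finset.sum_congr rfl (fun t _ => hcopy t), Finset.sum_const, Finset.card_univ,
        Fintype.card_fin, nsmul_eq_mul, ← mul_assoc, one_div_mul_cancel, one_mul]
      exact_mod_cast hL.ne'
    have h1 : (CSPRegularization.regG F L hL hm).optMin ≤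
        (CSPRegularization.regG F L hL hm).val ζs :=
      ciInf_le (Set.finite_range _).bddBelow ζs
    have h2 : F.val χs ≤ F.optMin := le_ciInf hχs
    rw [hval] at h1
    exact h1.trans h2
  · intro ζ
    obtain ⟨t₀, _, ht₀⟩ := Finset.exists_min_image Finset.univ
      (fun t : Fin L => F.val (CSPRegularization.liftA hq F ζ (t : ℕ)))
      ⟨⟨0, hL⟩, Finset.mem_univ _⟩
    refine ⟨CSPRegularization.liftA hq F ζ (t₀ : ℕ), ?_⟩
    have hv := CSPRegularization.regG_val hq F L hL hm hFunw ζ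
    have hLpos : (0 : ℝ) < L := by exact_mod_cast hL
    have hsum : (L : ℝ) * F.val (CSPRegularization.liftA hq F ζ (t₀ : ℕ)) ≤
        ∑ t : Fin L, F.val (CSPRegularization.liftA hq F ζ (t : ℕ)) := by
      have hle := Finset.card_nsmul_le_sum Finset.univ
        (fun t : Fin L => F.val (CSPRegularization.liftA hq F ζ (t : ℕ)))
        (F.val (CSPRegularization.liftA hq F ζ (t₀ : ℕ)))
        (fun t _ => ht₀ t (Finset.mem_univ t))
      simpa [nsmul_eq_mul] using hle
    have hkey : F.val (CSPRegularization.liftA hq F ζ (t₀ : ℕ)) ≤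
        (CSPRegularization.regG F L hL hm).val ζ := by
      rw [hv]
      calc F.val (CSPRegularization.liftA hq F ζ (t₀ : ℕ))
          = (1 / (L : ℝ)) * ((L : ℝ) * F.val (CSPRegularization.liftA hq F ζ (t₀ : ℕ))) := by
            field_simp
        _ ≤ (1 / (L : ℝ)) * ∑ t : Fin L, F.val (CSPRegularization.liftA hq F ζ (t : ℕ)) :=
            mul_le_mul_of_nonneg_left hsum (by positivity)
    linarith
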